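/- Let P ⊆ ℝⁿ be a discrete point set and p ∈ ∂P a boundary point (p ∈ P ∩ ∂conv(P)). If the Voronoi cell V(p) is a polyhedron, then the direction cone C(p) = cone(P − p) is finitely generated. -/

import Mathlib

open scoped RealInnerProductSpace
open Set

noncomputable section

abbrev E (n : ℕ) := EuclideanSpace ℝ (Fin n)

/-- `P` is discrete: every bounded set contains only finitely many points of `P`. -/
def IsDiscretePts {n : ℕ} (P : Set (E n)) : Prop :=
  ∀ B : Set (E n), Bornology.IsBounded B → (P ∩ B).Finite

/-- The Voronoi cell of `p` relative to `P`. -/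
def voronoiCell {n : ℕ} (P : Set (E n)) (p : E n) : Set (E n) :=
  {x | ∀ q ∈ P, dist x p ≤ dist x q}

/-- A polyhedron: a finite intersection of closed half-spaces. -/
def IsPolyhedron {n : ℕ} (S : Set (E n)) : Prop :=
  ∃ (k : ℕ) (y : Fin k → E n) (α : Fin k → ℝ),
    S = ⋂ i, {x : E n | (inner ℝ x (y i) : ℝ) ≤ α i}

/-- A polytope: a bounded polyhedron. -/
def IsPolytope {n : ℕ} (S : Set (E n)) : Prop :=
  IsPolyhedron S ∧ Bornology.IsBounded S

/-- The half-space of points at least as close to `p` as to `q`. -/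
def halfSpace {n : ℕ} (p q : E n) : Set (E n) :=
  {x : E n | (inner ℝ (x - p) (q - p) : ℝ) ≤ (1/2) * ‖q - p‖^2}

/-- The conic hull: all nonnegative combinations of finitely many elements of `M`. -/
def coneHull {n : ℕ} (M : Set (E n)) : Set (E n) :=
  {x | ∃ (k : ℕ) (v : Fin k → E n) (c : Fin k → ℝ),
    (∀ i, v i ∈ M) ∧ (∀ i, 0 ≤ c i) ∧ x = ∑ i, c i • v i}

/-- The direction cone of `p`: the conic hull of `P - p`. -/
def dirCone {n : ℕ} (P : Set (E n)) (p : E n) : Set (E n) :=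
  coneHull ((fun q => q - p) '' P)

/-- A cone is finitely generated if it is the conic hull of finitely many vectors. -/
def FinitelyGeneratedCone {n : ℕ} (C : Set (E n)) : Prop :=
  ∃ (k : ℕ) (v : Fin k → E n), C = coneHull (Set.range v)

/-- `q` is Voronoi relevant for `p`: dropping `halfSpace p q` strictly enlarges the
intersection defining the Voronoi cell. -/
def VoronoiRelevant {n : ℕ} (P : Set (E n)) (p q : E n) : Prop :=
  (⋂ r ∈ P \ {p}, halfSpace p r) ⊂ ⋂ r ∈ P \ {p, q}, halfSpace p r

/-! ### Auxiliary lemmas on conic hulls -/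

section ConeHullLemmas
variable {n : ℕ}

lemma zero_mem_coneHull (M : Set (E n)) : (0 : E n) ∈ coneHull M :=
  ⟨0, fun i => i.elim0, fun i => i.elim0, fun i => i.elim0, fun i => i.elim0, by simp⟩

lemma mem_coneHull_self {M : Set (E n)} {x : E n} (h : x ∈ M) : x ∈ coneHull M :=
  ⟨1, fun _ => x, fun _ => 1, fun _ => h, fun _ => zero_le_one, by simp⟩

lemma coneHull_mono {M N : Set (E n)} (h : M ⊆ N) : coneHull M ⊆ coneHull N := by
  rintro x ⟨k, v, c, hv, hc, rfl⟩
  exact ⟨k, v, c, fun i => h (hv i), hc, rfl⟩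

lemma add_mem_coneHull {M : Set (E n)} {x y : E n}
    (hx : x ∈ coneHull M) (hy : y ∈ coneHull M) : x + y ∈ coneHull M := by
  obtain ⟨k, v, c, hv, hc, rfl⟩ := hx
  obtain ⟨m, w, d, hw, hd, rfl⟩ := hy
  refine ⟨k + m, Fin.append v w, Fin.append c d, ?_, ?_, ?_⟩
  · refine Fin.addCases (fun j => ?_) (fun j => ?_)
    · rw [Fin.append_left]; exact hv j
    · rw [Fin.append_right]; exact hw j
  · refine Fin.addCases (fun j => ?_) (fun j => ?_)
    · rw [Fin.append_left]; exact hc j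
    · rw [Fin.append_right]; exact hd j
  · rw [Fin.sum_univ_add]
    simp [Fin.append_left, Fin.append_right]

lemma smul_mem_coneHull {M : Set (E n)} {a : ℝ} (ha : 0 ≤ a) {x : E n}
    (hx : x ∈ coneHull M) : a • x ∈ coneHull M := by
  obtain ⟨k, v, c, hv, hc, rfl⟩ := hx
  refine ⟨k, v, fun i => a * c i, hv, fun i => mul_nonneg ha (hc i), ?_⟩
  rw [Finset.smul_sum]
  simp [smul_smul]

lemma sum_mem_coneHull {M : Set (E n)} {ι : Type*} {t : Finset ι} {f : ι → E n}
    (h : ∀ i ∈ t, f i ∈ coneHull M) : ∑ i ∈ t, f i ∈ coneHull M := by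
  classical
  induction t using Finset.induction_on with
  | empty => simpa using zero_mem_coneHull M
  | insert _ _ hnot ih =>
    rw [Finset.sum_insert hnot]
    exact add_mem_coneHull (h _ (Finset.mem_insert_self _ _))
      (ih fun i hi => h i (Finset.mem_insert_of_mem hi))

lemma convex_coneHull (M : Set (E n)) : Convex ℝ (coneHull M) := by
  intro x hx y hy a b ha hb _
  exact add_mem_coneHull (smul_mem_coneHull ha hx) (smul_mem_coneHull hb hy)

lemma coneHull_subset_coneHull {M N : Set (E n)} (h : M ⊆ coneHull N) :
    coneHull M ⊆ coneHull N := by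
  rintro x ⟨k, v, c, hv, hc, rfl⟩
  exact sum_mem_coneHull fun i _ => smul_mem_coneHull (hc i) (h (hv i))

lemma coneHull_convexHull (M : Set (E n)) :
    coneHull (convexHull ℝ M) = coneHull M :=
  Set.Subset.antisymm
    (coneHull_subset_coneHull
      (convexHull_min (fun _ hx => mem_coneHull_self hx) (convex_coneHull M)))
    (coneHull_mono (subset_convexHull ℝ M))

end ConeHullLemmas

/-! ### Polars and the bipolar theorem -/

section Polar
variable {n : ℕ}

/-- The polar body of a set. -/
def polr (A : Set (E n)) : Set (E n) := {x | ∀ a ∈ A, ⟪a, x⟫ ≤ 1}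

lemma polr_convexHull (A : Set (E n)) : polr (convexHull ℝ A) = polr A := by
  apply Set.Subset.antisymm
  · exact fun x hx a ha => hx a (subset_convexHull ℝ A ha)
  · intro x hx a ha
    have hconv : Convex ℝ {a : E n | ⟪a, x⟫ ≤ 1} := by
      intro u hu v hv s t hs ht hst
      simp only [Set.mem_setOf_eq] at hu hv ⊢
      rw [inner_add_left, real_inner_smul_left, real_inner_smul_left]
      nlinarith [mul_le_mul_of_nonneg_left hu hs, mul_le_mul_of_nonneg_left hv ht]
    exact convexHull_min hx hconv ha

lemma subset_polr_polr (A : Set (E n)) : A ⊆ polr (polr A) := by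
  intro a ha x hx
  rw [real_inner_comm]
  exact hx a ha

lemma polr_polr_eq {A : Set (E n)} (hcl : IsClosed A) (hconv : Convex ℝ A)
    (h0 : (0 : E n) ∈ A) : polr (polr A) = A := by
  refine Set.Subset.antisymm ?_ (subset_polr_polr A)
  intro s hs
  by_contra hsA
  obtain ⟨f, u, hf, hfs⟩ := geometric_hahn_banach_closed_point hconv hcl hsA
  have hu : 0 < u := by simpa using hf 0 h0
  set v := (InnerProductSpace.toDual ℝ (E n)).symm f with hv
  have hfv : ∀ w : E n, ⟪v, w⟫ = f w := fun w => InnerProductSpace.toDual_symm_apply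
  have hxpol : u⁻¹ • v ∈ polr A := by
    intro a ha
    have h1 : ⟪a, u⁻¹ • v⟫ = u⁻¹ * f a := by
      rw [real_inner_smul_right, real_inner_comm, hfv]
    rw [h1]
    have h2 : f a < u := hf a ha
    have h3 : u⁻¹ * f a < u⁻¹ * u := by
      exact mul_lt_mul_of_pos_left h2 (inv_pos.mpr hu)
    rw [inv_mul_cancel₀ hu.ne'] at h3
    exact h3.le
  have hcontr := hs _ hxpol
  have h4 : ⟪u⁻¹ • v, s⟫ = u⁻¹ * f s := by
    rw [real_inner_smul_left, hfv]
  rw [h4] at hcontr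
  have h5 : u⁻¹ * u < u⁻¹ * f s := mul_lt_mul_of_pos_left hfs (inv_pos.mpr hu)
  rw [inv_mul_cancel₀ hu.ne'] at h5
  linarith

end Polar

/-! ### Compactness of convex hulls of compact sets -/

section CompactHull
variable {n : ℕ}

lemma isCompact_convexHull' {X : Set (E n)} (hX : IsCompact X) :
    IsCompact (convexHull ℝ X) := by
  classical
  rcases X.eq_empty_or_nonempty with rfl | ⟨x₀, hx₀⟩
  · simp
  set f : (Fin (n + 1) → ℝ) × (Fin (n + 1) → E n) → E n :=
    fun cv => ∑ i, cv.1 i • cv.2 i with hfdef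
  have hfc : Continuous f := by
    apply continuous_finset_sum
    intro i _
    exact ((continuous_apply i).comp continuous_fst).smul
      ((continuous_apply i).comp continuous_snd)
  have hD : IsCompact ((stdSimplex ℝ (Fin (n + 1))) ×ˢ
      (Set.pi Set.univ fun _ : Fin (n + 1) => X)) :=
    (isCompact_stdSimplex _ _).prod (isCompact_univ_pi fun _ => hX)
  have himg : convexHull ℝ X = f '' ((stdSimplex ℝ (Fin (n + 1))) ×ˢ
      (Set.pi Set.univ fun _ : Fin (n + 1) => X)) := by
    apply Set.Subset.antisymm
    · intro x hx
      obtain ⟨ι, hι, z, w, hzX, hai, hw, hw1, hsum⟩ :=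
        eq_pos_convex_span_of_mem_convexHull hx
      letI := hι
      have hcard : Fintype.card ι ≤ n + 1 := by
        have h1 := hai.card_le_finrank_succ
        have h2 : Module.finrank ℝ (vectorSpan ℝ (Set.range z)) ≤ n := by
          have h3 := Submodule.finrank_le (vectorSpan ℝ (Set.range z))
          simpa [finrank_euclideanSpace_fin] using h3
        omega
      obtain ⟨e⟩ : Nonempty (ι ↪ Fin (n + 1)) :=
        Function.Embedding.nonempty_of_card_le (by simpa using hcard)
      set c : Fin (n + 1) → ℝ :=
        fun j => ∑ i ∈ Finset.univ.filter (fun i => e i = j), w i with hcdef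
      set v : Fin (n + 1) → E n :=
        fun j => if h : ∃ i, e i = j then z h.choose else x₀ with hvdef
      have hve : ∀ i, v (e i) = z i := by
        intro i
        have hex : ∃ i', e i' = e i := ⟨i, rfl⟩
        have hch : hex.choose = i := e.injective hex.choose_spec
        simp only [hvdef, dif_pos hex, hch]
      refine ⟨(c, v), ⟨⟨?_, ?_⟩, ?_⟩, ?_⟩
      · intro j
        exact Finset.sum_nonneg fun i _ => (hw i).le
      · show ∑ j, c j = 1
        rw [← hw1]
        exact Finset.sum_fiberwise_of_maps_to (fun i _ => Finset.mem_univ (e i)) w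
      · intro j _
        by_cases hj : ∃ i, e i = j
        · simpa only [hvdef, dif_pos hj] using hzX ⟨_, rfl⟩
        · simpa only [hvdef, dif_neg hj] using hx₀
      · show ∑ j, c j • v j = x
        have hterm : ∀ j, c j • v j =
            ∑ i ∈ Finset.univ.filter (fun i => e i = j), w i • v (e i) := by
          intro j
          rw [hcdef, Finset.sum_smul]
          refine Finset.sum_congr rfl fun i hi => ?_
          rw [(Finset.mem_filter.mp hi).2]
        calc ∑ j, c j • v j
            = ∑ j, ∑ i ∈ Finset.univ.filter (fun i => e i = j), w i • v (e i) := by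
              simp_rw [hterm]
          _ = ∑ i, w i • v (e i) :=
              Finset.sum_fiberwise_of_maps_to (fun i _ => Finset.mem_univ (e i)) _
          _ = ∑ i, w i • z i := by simp_rw [hve]
          _ = x := hsum
    · rintro _ ⟨⟨cw, v⟩, ⟨⟨hc0, hc1⟩, hvX⟩, rfl⟩
      exact (convex_convexHull ℝ X).sum_mem (fun i _ => hc0 i) hc1
        (fun i _ => subset_convexHull ℝ X (hvX i (Set.mem_univ i)))
  rw [himg]
  exact hD.image hfc

end CompactHull

/-! ### Distance vs inner product -/

section DistInner
variable {n : ℕ}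

lemma dist_le_dist_iff_inner {x p q : E n} :
    dist x p ≤ dist x q ↔ ⟪q - p, x - p⟫ ≤ ‖q - p‖ ^ 2 / 2 := by
  have h1 : dist x p ≤ dist x q ↔ dist x p ^ 2 ≤ dist x q ^ 2 := by
    constructor
    · intro h; exact pow_le_pow_left₀ dist_nonneg h 2
    · intro h
      nlinarith [dist_nonneg (x := x) (y := p), dist_nonneg (x := x) (y := q)]
  rw [h1, dist_eq_norm, dist_eq_norm]
  have h2 : x - q = (x - p) - (q - p) := by abel
  have hexp : ‖(x - p) - (q - p)‖ ^ 2
      = ‖x - p‖ ^ 2 - 2 * ⟪x - p, q - p⟫ + ‖q - p‖ ^ 2 := norm_sub_sq_real _ _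
  have hcomm : ⟪q - p, x - p⟫ = ⟪x - p, q - p⟫ := real_inner_comm _ _
  rw [h2, hexp, hcomm]
  constructor <;> intro h <;> linarith

lemma exists_isolation {P : Set (E n)} (hP : IsDiscretePts P) (p : E n) :
    ∃ ε : ℝ, 0 < ε ∧ ε ≤ 1 ∧ ∀ q ∈ P, q ≠ p → ε ≤ ‖q - p‖ := by
  classical
  have hfin : ((P ∩ Metric.closedBall p 1) \ {p}).Finite :=
    (hP _ Metric.isBounded_closedBall).subset Set.diff_subset
  rcases Set.eq_empty_or_nonempty ((P ∩ Metric.closedBall p 1) \ {p}) with hemp | hne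
  · refine ⟨1, one_pos, le_refl 1, fun q hq hqp => ?_⟩
    by_contra hlt
    push_neg at hlt
    have : q ∈ (P ∩ Metric.closedBall p 1) \ {p} := by
      refine ⟨⟨hq, ?_⟩, by simpa using hqp⟩
      rw [Metric.mem_closedBall, dist_eq_norm]
      linarith
    rw [hemp] at this
    exact this
  · have hsne : (hfin.toFinset.image fun q => ‖q - p‖).Nonempty := by
      obtain ⟨q, hq⟩ := hne
      exact ⟨‖q - p‖, Finset.mem_image_of_mem _ (hfin.mem_toFinset.mpr hq)⟩
    set m := (hfin.toFinset.image fun q => ‖q - p‖).min' hsne with hmdef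
    have hmpos : 0 < m := by
      have hmem := (hfin.toFinset.image fun q => ‖q - p‖).min'_mem hsne
      rw [Finset.mem_image] at hmem
      obtain ⟨q, hq, hqm⟩ := hmem
      rw [hfin.mem_toFinset] at hq
      have hqp : q ≠ p := by
        intro h; exact hq.2 (by simp [h])
      rw [hmdef, ← hqm]
      exact norm_pos_iff.mpr (sub_ne_zero.mpr hqp)
    refine ⟨min 1 m, lt_min one_pos hmpos, min_le_left _ _, fun q hq hqp => ?_⟩
    by_cases hball : q ∈ Metric.closedBall p 1
    · have : q ∈ (P ∩ Metric.closedBall p 1) \ {p} := ⟨⟨hq, hball⟩, by simpa using hqp⟩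
      have hmle : m ≤ ‖q - p‖ :=
        Finset.min'_le _ _ (Finset.mem_image_of_mem _ (hfin.mem_toFinset.mpr this))
      exact le_trans (min_le_right _ _) hmle
    · rw [Metric.mem_closedBall, not_le, dist_eq_norm] at hball
      exact le_trans (min_le_left _ _) hball.le

end DistInner

theorem stmt11 {n : ℕ} (P : Set (E n)) (hP : IsDiscretePts P) (p : E n) (hp : p ∈ P)
    (hbd : p ∈ frontier (convexHull ℝ P))
    (hpoly : IsPolyhedron (voronoiCell P p)) :
    FinitelyGeneratedCone (dirCone P p) := by
  classical
  obtain ⟨k, y, α, hVeq⟩ := hpoly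
  obtain ⟨ε, hε, hε1, hsep⟩ := exists_isolation hP p
  set W : Set (E n) := ((fun q => q - p) '' P) \ {0} with hWdef
  have hWnorm : ∀ w ∈ W, ε ≤ ‖w‖ := by
    rintro w ⟨⟨q, hq, rfl⟩, hw0⟩
    refine hsep q hq fun h => hw0 ?_
    simp [h]
  have hWne : ∀ w ∈ W, w ≠ 0 := by
    intro w hw h
    exact hw.2 (by simp [h])
  set S : Set (E n) := (fun w => (2 / ‖w‖ ^ 2) • w) '' W with hSdef
  set Vt : Set (E n) := {x | ∀ w ∈ W, ⟪w, x⟫ ≤ ‖w‖ ^ 2 / 2} with hVtdef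
  -- membership characterization of Vt as translated Voronoi cell
  have hVtmem : ∀ x : E n, x ∈ Vt ↔ (x + p) ∈ voronoiCell P p := by
    intro x
    constructor
    · intro hx q hq
      by_cases hqp : q = p
      · subst hqp; exact le_refl _
      · have hw : q - p ∈ W :=
          ⟨⟨q, hq, rfl⟩, by simp [sub_eq_zero, hqp]⟩
        have h1 := hx _ hw
        rw [dist_le_dist_iff_inner]
        simpa using h1
    · intro hx w hw
      obtain ⟨⟨q, hq, rfl⟩, -⟩ := hw
      have h1 := hx q hq
      rw [dist_le_dist_iff_inner] at h1
      simpa using h1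
  have hVt0 : (0 : E n) ∈ Vt := by
    intro w hw
    rw [inner_zero_right]
    positivity
  have hVtsmall : ∀ x : E n, ‖x‖ ≤ ε / 2 → x ∈ Vt := by
    intro x hx w hw
    have h1 : ⟪w, x⟫ ≤ ‖w‖ * ‖x‖ := real_inner_le_norm w x
    have h2 : ε ≤ ‖w‖ := hWnorm w hw
    nlinarith [norm_nonneg x, norm_nonneg w]
  set β : Fin k → ℝ := fun i => α i - ⟪p, y i⟫ with hβdef
  have hVt2 : ∀ x : E n, x ∈ Vt ↔ ∀ i, ⟪x, y i⟫ ≤ β i := by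
    intro x
    rw [hVtmem x, hVeq]
    simp only [Set.mem_iInter, Set.mem_setOf_eq]
    constructor
    · intro h i
      have h1 := h i
      rw [inner_add_left] at h1
      simp only [hβdef]
      linarith
    · intro h i
      have h1 := h i
      simp only [hβdef] at h1
      rw [inner_add_left]
      linarith
  have hβ0 : ∀ i, 0 ≤ β i := by
    intro i
    have h1 := (hVt2 0).mp hVt0 i
    simpa using h1
  have hβpos : ∀ i, y i ≠ 0 → 0 < β i := by
    intro i hyi
    have hyn : (0 : ℝ) < ‖y i‖ := norm_pos_iff.mpr hyi
    have hxhat : ((ε / 2) * ‖y i‖⁻¹) • y i ∈ Vt := by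
      apply hVtsmall
      rw [norm_smul, Real.norm_eq_abs, abs_of_nonneg (by positivity)]
      rw [mul_assoc, inv_mul_cancel₀ hyn.ne', mul_one]
    have h2 := (hVt2 _).mp hxhat i
    rw [real_inner_smul_left, real_inner_self_eq_norm_sq] at h2
    have h3 : (ε / 2) * ‖y i‖⁻¹ * ‖y i‖ ^ 2 = (ε / 2) * ‖y i‖ := by
      field_simp
    rw [h3] at h2
    exact lt_of_lt_of_le (mul_pos (half_pos hε) hyn) h2
  set z : Fin k → E n := fun i => if h : y i = 0 then 0 else (β i)⁻¹ • y i with hzdef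
  -- the two polar computations
  have hpolK : polr (convexHull ℝ ({0} ∪ S)) = Vt := by
    rw [polr_convexHull]
    ext x
    simp only [polr, Set.mem_setOf_eq]
    constructor
    · intro h w hw
      have hs := h _ (Set.mem_union_right _ ⟨w, hw, rfl⟩)
      rw [real_inner_smul_left] at hs
      have hw0 : (0 : ℝ) < ‖w‖ := lt_of_lt_of_le hε (hWnorm w hw)
      have h2 : (0 : ℝ) < ‖w‖ ^ 2 := by positivity
      rw [div_mul_eq_mul_div, div_le_one h2] at hs
      linarith
    · rintro h a (ha | ⟨w, hw, rfl⟩)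
      · rw [Set.mem_singleton_iff.mp ha, inner_zero_left]
        exact zero_le_one
      · rw [real_inner_smul_left]
        have hw0 : (0 : ℝ) < ‖w‖ := lt_of_lt_of_le hε (hWnorm w hw)
        have h2 : (0 : ℝ) < ‖w‖ ^ 2 := by positivity
        have h3 := h w hw
        rw [div_mul_eq_mul_div, div_le_one h2]
        linarith
  have hpolQ : polr (convexHull ℝ ({0} ∪ Set.range z)) = Vt := by
    rw [polr_convexHull]
    ext x
    simp only [polr, Set.mem_setOf_eq]
    constructor
    · intro h
      rw [hVt2]
      intro i
      by_cases hyi : y i = 0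
      · rw [hyi, inner_zero_right]
        exact hβ0 i
      · have hb := hβpos i hyi
        have h1 := h (z i) (Set.mem_union_right _ ⟨i, rfl⟩)
        simp only [hzdef, dif_neg hyi] at h1
        rw [real_inner_smul_left] at h1
        have hc : ⟪y i, x⟫ = ⟪x, y i⟫ := real_inner_comm _ _
        have h2 : β i * ((β i)⁻¹ * ⟪y i, x⟫) ≤ β i * 1 :=
          mul_le_mul_of_nonneg_left h1 hb.le
        rw [← mul_assoc, mul_inv_cancel₀ hb.ne', one_mul, mul_one] at h2
        linarith [h2, hc ▸ h2]
    · rintro h a (ha | ⟨i, rfl⟩)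
      · rw [Set.mem_singleton_iff.mp ha, inner_zero_left]
        exact zero_le_one
      · rw [hVt2] at h
        by_cases hyi : y i = 0
        · simp only [hzdef, dif_pos hyi, inner_zero_left]
          exact zero_le_one
        · have hb := hβpos i hyi
          have h1 := h i
          simp only [hzdef, dif_neg hyi]
          rw [real_inner_smul_left]
          have hc : ⟪y i, x⟫ = ⟪x, y i⟫ := real_inner_comm _ _
          have h2 : (β i)⁻¹ * ⟪y i, x⟫ ≤ (β i)⁻¹ * β i :=
            mul_le_mul_of_nonneg_left (by rw [hc]; exact h1) (inv_pos.mpr hb).le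
          rw [inv_mul_cancel₀ hb.ne'] at h2
          exact h2
  -- compactness of conv({0} ∪ S)
  have hSbound : ∀ s ∈ ({0} : Set (E n)) ∪ S, s ∈ Metric.closedBall (0 : E n) (2 / ε) := by
    rintro s (hs | ⟨w, hw, rfl⟩)
    · rw [Set.mem_singleton_iff.mp hs]
      simpa using by positivity
    · have hw0 : (0 : ℝ) < ‖w‖ := lt_of_lt_of_le hε (hWnorm w hw)
      rw [Metric.mem_closedBall, dist_zero_right, norm_smul, Real.norm_eq_abs,
        abs_of_nonneg (by positivity)]
      have h1 : 2 / ‖w‖ ^ 2 * ‖w‖ = 2 / ‖w‖ := by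
        field_simp
      rw [h1, div_le_div_iff₀ hw0 hε]
      nlinarith [hWnorm w hw]
  have hfar : ∀ r : ℝ, 0 < r → (S \ Metric.ball 0 r).Finite := by
    intro r hr
    have hPfin : (P ∩ Metric.closedBall p (2 / r)).Finite :=
      hP _ Metric.isBounded_closedBall
    apply Set.Finite.subset (((hPfin.image (fun q => q - p)).image
      (fun w => (2 / ‖w‖ ^ 2) • w)))
    rintro s ⟨⟨w, hw, rfl⟩, hsb⟩
    have hw0 : (0 : ℝ) < ‖w‖ := lt_of_lt_of_le hε (hWnorm w hw)
    have hnorm : ‖(2 / ‖w‖ ^ 2) • w‖ = 2 / ‖w‖ := by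
      rw [norm_smul, Real.norm_eq_abs, abs_of_nonneg (by positivity)]
      field_simp
    have hsr : r ≤ 2 / ‖w‖ := by
      have h1 : ¬ dist ((2 / ‖w‖ ^ 2) • w) 0 < r := by
        simpa [Metric.mem_ball] using hsb
      rw [dist_zero_right, hnorm] at h1
      linarith
    have hwr : ‖w‖ ≤ 2 / r := by
      rw [le_div_iff₀ hr]
      rw [le_div_iff₀ hw0] at hsr
      nlinarith
    obtain ⟨⟨q, hq, rfl⟩, -⟩ := hw
    refine ⟨q - p, ⟨q, ⟨hq, ?_⟩, rfl⟩, rfl⟩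
    rw [Metric.mem_closedBall, dist_eq_norm]
    exact hwr
  have hScl : IsClosed (({0} : Set (E n)) ∪ S) := by
    rw [← isOpen_compl_iff, isOpen_iff_mem_nhds]
    intro x hx
    simp only [Set.mem_compl_iff, Set.mem_union, not_or] at hx
    obtain ⟨hx0, hxS⟩ := hx
    have hxne : x ≠ 0 := by simpa using hx0
    have hxn : (0 : ℝ) < ‖x‖ := norm_pos_iff.mpr hxne
    have hFfin : (S \ Metric.ball 0 (‖x‖ / 2)).Finite := hfar _ (by positivity)
    have hopen : IsOpen (Metric.ball x (‖x‖ / 2) \ (S \ Metric.ball 0 (‖x‖ / 2))) :=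
      Metric.isOpen_ball.sdiff hFfin.isClosed
    have hxmem : x ∈ Metric.ball x (‖x‖ / 2) \ (S \ Metric.ball 0 (‖x‖ / 2)) :=
      ⟨Metric.mem_ball_self (by positivity), fun hF' => hxS hF'.1⟩
    apply Filter.mem_of_superset (hopen.mem_nhds hxmem)
    rintro u ⟨hub, huF⟩
    have hdist : dist u x < ‖x‖ / 2 := hub
    have h1 : ‖x‖ - ‖u‖ ≤ ‖x - u‖ := norm_sub_norm_le x u
    have h2 : ‖x - u‖ = dist u x := by rw [dist_comm, dist_eq_norm]
    have hun : ‖x‖ / 2 < ‖u‖ := by linarith [h2 ▸ h1]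
    simp only [Set.mem_compl_iff, Set.mem_union, not_or]
    constructor
    · intro h0
      rw [Set.mem_singleton_iff.mp h0] at hun
      simp at hun
      linarith
    · intro hus
      refine huF ⟨hus, ?_⟩
      simp only [Metric.mem_ball, dist_zero_right, not_lt]
      linarith
  have hKcomp : IsCompact (convexHull ℝ (({0} : Set (E n)) ∪ S)) := by
    apply isCompact_convexHull'
    exact (isCompact_closedBall (0 : E n) (2 / ε)).of_isClosed_subset hScl hSbound
  have hQcomp : IsCompact (convexHull ℝ (({0} : Set (E n)) ∪ Set.range z)) :=
    (((Set.finite_singleton 0).union (Set.finite_range z))).isCompact_convexHull ℝ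
  have hK0 : (0 : E n) ∈ convexHull ℝ (({0} : Set (E n)) ∪ S) :=
    subset_convexHull ℝ _ (Set.mem_union_left _ rfl)
  have hQ0 : (0 : E n) ∈ convexHull ℝ (({0} : Set (E n)) ∪ Set.range z) :=
    subset_convexHull ℝ _ (Set.mem_union_left _ rfl)
  -- bipolar theorem: the two hulls coincide
  have hKQ : convexHull ℝ (({0} : Set (E n)) ∪ S)
      = convexHull ℝ (({0} : Set (E n)) ∪ Set.range z) := by
    have h1 := polr_polr_eq hKcomp.isClosed (convex_convexHull ℝ _) hK0
    have h2 := polr_polr_eq hQcomp.isClosed (convex_convexHull ℝ _) hQ0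
    rw [← h1, ← h2, hpolK, hpolQ]
  -- final conic hull chain
  refine ⟨k, z, ?_⟩
  have hstep1 : dirCone P p = coneHull (({0} : Set (E n)) ∪ S) := by
    apply Set.Subset.antisymm
    · apply coneHull_subset_coneHull
      rintro _ ⟨q, hq, rfl⟩
      show q - p ∈ coneHull (({0} : Set (E n)) ∪ S)
      by_cases hqp : q = p
      · rw [hqp, sub_self]
        exact zero_mem_coneHull _
      · have hwW : q - p ∈ W := ⟨⟨q, hq, rfl⟩, by simp [sub_eq_zero, hqp]⟩
        have hw0 : q - p ≠ 0 := sub_ne_zero.mpr hqp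
        have hwn : (0 : ℝ) < ‖q - p‖ := norm_pos_iff.mpr hw0
        have heq : (‖q - p‖ ^ 2 / 2) • ((2 / ‖q - p‖ ^ 2) • (q - p)) = q - p := by
          rw [smul_smul]
          have h1 : ‖q - p‖ ^ 2 / 2 * (2 / ‖q - p‖ ^ 2) = 1 := by
            field_simp
          rw [h1, one_smul]
        rw [← heq]
        exact smul_mem_coneHull (by positivity)
          (mem_coneHull_self (Set.mem_union_right _ ⟨_, hwW, rfl⟩))
    · apply coneHull_subset_coneHull
      rintro a (ha | ⟨w, hw, rfl⟩)
      · rw [Set.mem_singleton_iff.mp ha]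
        exact zero_mem_coneHull _
      · exact smul_mem_coneHull (by positivity) (mem_coneHull_self hw.1)
  calc dirCone P p = coneHull (({0} : Set (E n)) ∪ S) := hstep1
    _ = coneHull (convexHull ℝ (({0} : Set (E n)) ∪ S)) := (coneHull_convexHull _).symm
    _ = coneHull (convexHull ℝ (({0} : Set (E n)) ∪ Set.range z)) := by rw [hKQ]
    _ = coneHull (({0} : Set (E n)) ∪ Set.range z) := coneHull_convexHull _
    _ = coneHull (Set.range z) := by
        apply Set.Subset.antisymm
        · apply coneHull_subset_coneHull
          rintro a (ha | ha)
          · rw [Set.mem_singleton_iff.mp ha]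
            exact zero_mem_coneHull _
          · exact mem_coneHull_self ha
        · exact coneHull_mono Set.subset_union_right
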